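/- Let g ∈ ℤ[x] be a monic squarefree polynomial with g(0) ≠ 0 and deg(g) ≥ 1, and suppose there is a positive integer N₀ such that for every prime p ≥ N₀ and every prime q, q ∣ g(p) implies q ∣ g(p^p). Then there exists a constant C, depending only on g, such that there are infinitely many primes q with the following two properties: the reduction of g modulo q splits completely into distinct linear factors in 𝔽_q[x], and every root r of g modulo q has multiplicative order at most C in (ℤ/qℤ)^×. -/

import Mathlib

open Polynomial
open Nat


lemma aux_totient_bound (n : ℕ) (hn : 0 < n) : n ≤ 2 * n.totient ^ 2 := by
  classical
  set pf := n.primeFactors with hpf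
  set R := ∏ p ∈ pf, p with hR
  set S := ∏ p ∈ pf, (p - 1) with hS
  have hid : n.totient * R = n * S := Nat.totient_mul_prod_primeFactors n
  have hRdvd : R ∣ n := Nat.prod_primeFactors_dvd n
  obtain ⟨t, ht⟩ := hRdvd
  have hRpos : 0 < R := Finset.prod_pos fun p hp => (Nat.prime_of_mem_primeFactors hp).pos
  have htpos : 0 < t := by
    rcases Nat.eq_zero_or_pos t with h | h
    · subst h; simp [ht] at hn
    · exact h
  have hphi : n.totient = t * S := by
    have : R * (n.totient) = R * (t * S) := by
      rw [mul_comm R n.totient, hid, ht]; ring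
    exact Nat.eq_of_mul_eq_mul_left hRpos this
  have hSle : S ≤ n.totient := by
    rw [hphi]; exact Nat.le_mul_of_pos_left _ htpos
  have hRle : R ≤ 2 ^ pf.card * S := by
    calc R ≤ ∏ p ∈ pf, 2 * (p - 1) := by
            apply Finset.prod_le_prod'
            intro p hp
            have h2 : 2 ≤ p := (Nat.prime_of_mem_primeFactors hp).two_le
            omega
      _ = 2 ^ pf.card * S := by
            rw [Finset.prod_mul_distrib, Finset.prod_const]
  have h2c : 2 ^ pf.card ≤ 2 * S := by
    by_cases h2 : 2 ∈ pf
    · have hcard : 0 < pf.card := Finset.card_pos.mpr ⟨2, h2⟩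
      have hSerase : S = ∏ p ∈ pf.erase 2, (p - 1) := by
        rw [hS, ← Finset.prod_erase_mul pf _ h2]
        simp
      have : 2 ^ (pf.erase 2).card ≤ ∏ p ∈ pf.erase 2, (p - 1) := by
        rw [← Finset.prod_const]
        apply Finset.prod_le_prod'
        intro p hp
        have hp2 : p ≠ 2 := Finset.ne_of_mem_erase hp
        have := (Nat.prime_of_mem_primeFactors (Finset.mem_of_mem_erase hp)).two_le
        have hodd : 2 < p := by
          rcases Nat.lt_or_ge p 3 with h | h
          · omega
          · omega
        omega
      have hec : (pf.erase 2).card = pf.card - 1 := Finset.card_erase_of_mem h2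
      calc 2 ^ pf.card = 2 * 2 ^ (pf.card - 1) := by
            rw [← pow_succ']; congr 1; omega
        _ ≤ 2 * S := by
            apply Nat.mul_le_mul_left
            rw [hSerase]; rw [← hec]; exact this
    · have : 2 ^ pf.card ≤ S := by
        rw [hS, ← Finset.prod_const]
        apply Finset.prod_le_prod'
        intro p hp
        have hprime := Nat.prime_of_mem_primeFactors hp
        have : p ≠ 2 := fun h => h2 (h ▸ hp)
        have := hprime.two_le
        omega
      omega
  have h1 : S * t = φ n := by rw [hphi]; ring
  calc n = R * t := ht
    _ ≤ (2 ^ pf.card * S) * t := Nat.mul_le_mul_right _ hRle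
    _ ≤ (2 * S * S) * t := Nat.mul_le_mul_right _ (Nat.mul_le_mul_right _ h2c)
    _ = 2 * S * (S * t) := by ring
    _ = 2 * S * φ n := by rw [h1]
    _ ≤ 2 * φ n * φ n := Nat.mul_le_mul_right _ (Nat.mul_le_mul_left _ hSle)
    _ = 2 * φ n ^ 2 := by ring


lemma aux_order_bound (g : Polynomial ℤ) (hg : g.Monic) (hg0 : g.eval 0 ≠ 0) (N₀ : ℕ)
    (hdvd : ∀ p : ℕ, p.Prime → N₀ ≤ p → ∀ q : ℕ, q.Prime →
      (q : ℤ) ∣ g.eval (p : ℤ) → (q : ℤ) ∣ g.eval ((p : ℤ) ^ p))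
    (q : ℕ) (hq : q.Prime) (hlt : (g.eval 0).natAbs < q) (n : ℤ)
    (hn : (q : ℤ) ∣ g.eval n) :
    (q : ℤ) ∣ n ^ (2 * g.natDegree ^ 2)! - 1 := by
  classical
  haveI : Fact q.Prime := ⟨hq⟩
  set x : ZMod q := ((n : ℤ) : ZMod q) with hxdef
  have hx0 : x ≠ 0 := by
    intro h
    have hqn : (q : ℤ) ∣ n := by rwa [ZMod.intCast_zmod_eq_zero_iff_dvd] at h
    have h1 : (q : ℤ) ∣ g.eval n - g.eval 0 := by
      have := sub_dvd_eval_sub n 0 g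
      rw [sub_zero] at this
      exact dvd_trans hqn this
    have h2 : (q : ℤ) ∣ g.eval 0 := by
      have := dvd_sub hn h1
      simpa using this
    have h3 : q ∣ (g.eval 0).natAbs := Int.natAbs_dvd_natAbs.mpr <| by simpa using h2
    have h4 : (g.eval 0).natAbs ≠ 0 := by simpa using hg0
    have := Nat.le_of_dvd (Nat.pos_of_ne_zero h4) h3
    omega
  -- key claim: for every a coprime to q-1, n^a is a root of g mod q
  have key : ∀ a : ℕ, Nat.Coprime a (q - 1) → (q : ℤ) ∣ g.eval (n ^ a) := by
    intro a ha
    have hco : Nat.Coprime q (q - 1) := by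
      have h1 : q - (q - 1) = 1 := by have := hq.two_le; omega
      exact (Nat.coprime_sub_self_left (by omega)).mp (by rw [h1]; exact Nat.coprime_one_left _)
    obtain ⟨c₀, hc₀q, hc₀m⟩ := Nat.chineseRemainder hco x.val a
    set M := q * (q - 1) with hM
    haveI : NeZero M := ⟨by have := hq.two_le; exact Nat.mul_ne_zero (by omega) (by omega)⟩
    have hcq : Nat.Coprime c₀ q := by
      rw [Nat.coprime_comm]
      rw [hq.coprime_iff_not_dvd]
      intro hdvd'
      have : c₀ ≡ 0 [MOD q] := (Nat.modEq_zero_iff_dvd).mpr hdvd'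
      have h5 : x.val ≡ 0 [MOD q] := hc₀q.symm.trans this
      have h6 : q ∣ x.val := (Nat.modEq_zero_iff_dvd).mp h5
      have h7 : x.val = 0 := Nat.eq_zero_of_dvd_of_lt h6 (ZMod.val_lt x)
      exact hx0 (by rwa [ZMod.val_eq_zero] at h7)
    have hcm : Nat.Coprime c₀ (q - 1) := by
      haveI : NeZero (q - 1) := ⟨by have := hq.two_le; omega⟩
      have h8 : ((c₀ : ℕ) : ZMod (q - 1)) = ((a : ℕ) : ZMod (q - 1)) :=
        (ZMod.natCast_eq_natCast_iff _ _ _).mpr hc₀m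
      have h9 : IsUnit ((c₀ : ℕ) : ZMod (q - 1)) := by
        rw [h8]; exact (ZMod.isUnit_iff_coprime a (q - 1)).mpr ha
      exact (ZMod.isUnit_iff_coprime c₀ (q - 1)).mp h9
    have hunit : IsUnit ((c₀ : ℕ) : ZMod M) :=
      (ZMod.isUnit_iff_coprime c₀ M).mpr (Nat.Coprime.mul_right hcq hcm)
    obtain ⟨p, hpgt, hpp, hpc⟩ := Nat.forall_exists_prime_gt_and_eq_mod hunit N₀
    have hmod : p ≡ c₀ [MOD M] := (ZMod.natCast_eq_natCast_iff _ _ _).mp hpc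
    have hmq : p ≡ x.val [MOD q] := (hmod.of_dvd ⟨q - 1, rfl⟩).trans hc₀q
    have hm1 : p ≡ a [MOD q - 1] := (hmod.of_dvd ⟨q, mul_comm q (q-1) ▸ rfl⟩).trans hc₀m
    have hpx : ((p : ℕ) : ZMod q) = x := by
      have h1 : ((p : ℕ) : ZMod q) = ((x.val : ℕ) : ZMod q) :=
        (ZMod.natCast_eq_natCast_iff _ _ _).mpr hmq
      have h2 : ((x.val : ℕ) : ZMod q) = x := by rw [ZMod.natCast_val, ZMod.cast_id]
      rw [h1, h2]
    -- q ∣ g.eval p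
    have hgp : (q : ℤ) ∣ g.eval (p : ℤ) := by
      have hd1 : (q : ℤ) ∣ (p : ℤ) - n := by
        rw [← ZMod.intCast_zmod_eq_zero_iff_dvd]
        push_cast
        rw [hpx, ← hxdef]
        ring
      have hd2 : (q : ℤ) ∣ g.eval (p : ℤ) - g.eval n :=
        dvd_trans hd1 (sub_dvd_eval_sub _ _ g)
      have := dvd_add hd2 hn
      simpa using this
    have hpow := hdvd p hpp (le_of_lt hpgt) q hq hgp
    -- x^p = x^a
    have hord : orderOf (Units.mk0 x hx0) ∣ q - 1 :=
      ZMod.orderOf_units_dvd_card_sub_one (Units.mk0 x hx0)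
    have hxa : x ^ p = x ^ a := by
      have hu : (Units.mk0 x hx0) ^ p = (Units.mk0 x hx0) ^ a :=
        pow_eq_pow_iff_modEq.mpr (hm1.of_dvd hord)
      have := congrArg Units.val hu
      simpa using this
    have hd3 : (q : ℤ) ∣ (p : ℤ) ^ p - n ^ a := by
      rw [← ZMod.intCast_zmod_eq_zero_iff_dvd]
      push_cast
      rw [hpx, ← hxdef, hxa]
      ring
    have hd4 : (q : ℤ) ∣ g.eval ((p : ℤ) ^ p) - g.eval (n ^ a) :=
      dvd_trans hd3 (sub_dvd_eval_sub _ _ g)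
    have := dvd_sub hpow hd4
    simpa using this
  -- roots and order analysis
  set G := g.map (Int.castRingHom (ZMod q)) with hGdef
  have hGm : G.Monic := hg.map _
  have hG0 : G ≠ 0 := hGm.ne_zero
  have hroot : ∀ a : ℕ, Nat.Coprime a (q - 1) → x ^ a ∈ G.roots.toFinset := by
    intro a ha
    rw [Multiset.mem_toFinset, mem_roots hG0]
    · have : G.eval (((n ^ a : ℤ) : ZMod q)) = ((g.eval (n ^ a) : ℤ) : ZMod q) := by
        rw [hGdef]
        exact eval_intCast_map (Int.castRingHom (ZMod q)) g (n ^ a)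
      have h2 : ((g.eval (n ^ a) : ℤ) : ZMod q) = 0 :=
        (ZMod.intCast_zmod_eq_zero_iff_dvd _ _).mpr (key a ha)
      have h3 : ((n ^ a : ℤ) : ZMod q) = x ^ a := by push_cast; rw [← hxdef]
      rw [IsRoot.def, ← h3, this, h2]
  set u : (ZMod q)ˣ := Units.mk0 x hx0 with hudef
  set m := orderOf u with hmdef
  have hord : m ∣ q - 1 := ZMod.orderOf_units_dvd_card_sub_one u
  have hmpos : 0 < m := orderOf_pos u
  haveI : NeZero m := ⟨hmpos.ne'⟩
  haveI : NeZero (q - 1) := ⟨by have := hq.two_le; omega⟩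
  -- injective map (ZMod m)ˣ → roots
  have hsurj := ZMod.unitsMap_surjective (m := q - 1) (n := m) hord
  set F : (ZMod m)ˣ → (ZMod q)ˣ := fun b =>
    u ^ ((Function.surjInv hsurj b : (ZMod (q - 1))ˣ) : ZMod (q - 1)).val with hFdef
  have hFcoe : ∀ b : (ZMod m)ˣ,
      ((((Function.surjInv hsurj b : (ZMod (q - 1))ˣ) : ZMod (q - 1)).val : ℕ) : ZMod m)
        = (b : ZMod m) := by
    intro b
    have h1 : ZMod.unitsMap hord (Function.surjInv hsurj b) = b :=
      Function.surjInv_eq hsurj b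
    have h2 := congrArg (fun u : (ZMod m)ˣ => (u : ZMod m)) h1
    simp only [ZMod.unitsMap, Units.coe_map, MonoidHom.coe_coe] at h2
    rw [← h2, ZMod.castHom_apply, ZMod.natCast_val]
    rfl
  have hFmem : ∀ b, ((F b : ZMod q)) ∈ G.roots.toFinset := fun b => by
    have := hroot _ (ZMod.val_coe_unit_coprime (Function.surjInv hsurj b))
    simpa [hFdef, hudef] using this
  have hFinj : Function.Injective F := by
    intro b b' hbb
    have h1 : _ ≡ _ [MOD m] := pow_eq_pow_iff_modEq.mp hbb
    have h2 := (ZMod.natCast_eq_natCast_iff _ _ _).mpr h1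
    rw [hFcoe b, hFcoe b'] at h2
    exact Units.ext h2
  have hcard : Nat.totient m ≤ g.natDegree := by
    have h1 : Fintype.card (ZMod m)ˣ ≤ G.roots.toFinset.card := by
      rw [← Finset.card_univ]
      exact Finset.card_le_card_of_injOn (fun b => (F b : ZMod q))
        (fun b _ => hFmem b) (fun b _ b' _ h => hFinj (Units.ext h))
    have h2 : G.roots.toFinset.card ≤ Multiset.card G.roots := Multiset.toFinset_card_le _
    have h3 : Multiset.card G.roots ≤ G.natDegree := card_roots' G
    have h4 : G.natDegree = g.natDegree := hg.natDegree_map _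
    rw [ZMod.card_units_eq_totient] at h1
    omega
  have hm2 : m ≤ 2 * g.natDegree ^ 2 := by
    have := aux_totient_bound m hmpos
    have h5 : m.totient ^ 2 ≤ g.natDegree ^ 2 := Nat.pow_le_pow_left hcard 2
    omega
  have hmL : m ∣ (2 * g.natDegree ^ 2)! := Nat.dvd_factorial hmpos hm2
  have hxL : x ^ (2 * g.natDegree ^ 2)! = 1 := by
    have hu : u ^ (2 * g.natDegree ^ 2)! = 1 := orderOf_dvd_iff_pow_eq_one.mp hmL
    have := congrArg Units.val hu
    simpa [hudef] using this
  rw [← ZMod.intCast_zmod_eq_zero_iff_dvd]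
  push_cast
  rw [← hxdef, hxL]
  ring


lemma aux_schur (h : Polynomial ℤ) (hm : h.Monic) (hd : 1 ≤ h.natDegree)
    (h0 : h.eval 0 ≠ 0) (M : ℕ) :
    ∃ q : ℕ, q.Prime ∧ M < q ∧ ∃ n : ℤ, (q : ℤ) ∣ h.eval n := by
  classical
  set c := h.eval 0 with hc
  have hdegpos : 0 < h.degree := by
    rw [← natDegree_pos_iff_degree_pos]; omega
  have hmc : (h - C c).Monic := by
    have : (C c).degree < h.degree := lt_of_le_of_lt (degree_C_le) hdegpos
    simpa [sub_eq_add_neg] using hm.add_of_left (by simpa using this)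
  have hpc : (h + C c).Monic := by
    have : (C c).degree < h.degree := lt_of_le_of_lt (degree_C_le) hdegpos
    exact hm.add_of_left this
  set H := h * (h - C c) * (h + C c) with hH
  have hHm : H.Monic := (hm.mul hmc).mul hpc
  have hfin : {x : ℤ | H.IsRoot x}.Finite := finite_setOf_isRoot hHm.ne_zero
  set N := M + 1 with hN
  have hNfac : (0:ℤ) < (N ! : ℤ) := by exact_mod_cast Nat.factorial_pos N
  set f : ℕ → ℤ := fun s => c * ((N ! : ℤ) * ((s : ℤ) + 1)) with hf
  have hfinj : Function.Injective f := by
    intro s s' hss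
    simp only [hf] at hss
    have hc0 : c ≠ 0 := h0
    have h1 : ((s : ℤ) + 1) = ((s' : ℤ) + 1) :=
      mul_left_cancel₀ hNfac.ne' (mul_left_cancel₀ hc0 hss)
    omega
  have : ∃ s : ℕ, ¬ H.IsRoot (f s) := by
    by_contra hall
    push_neg at hall
    have : Set.InjOn f (f ⁻¹' {x : ℤ | H.IsRoot x}) := hfinj.injOn
    have hpre : (f ⁻¹' {x : ℤ | H.IsRoot x}).Finite := hfin.preimage this
    have : (Set.univ : Set ℕ) ⊆ f ⁻¹' {x : ℤ | H.IsRoot x} := fun s _ => hall s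
    exact Set.infinite_univ (hpre.subset this)
  obtain ⟨s₀, hs₀⟩ := this
  set t : ℤ := (N ! : ℤ) * ((s₀ : ℤ) + 1) with ht
  set n := c * t with hn
  obtain ⟨e, he⟩ : c * t - 0 ∣ h.eval (c * t) - h.eval 0 := sub_dvd_eval_sub _ _ h
  rw [sub_zero, ← hc] at he
  set w : ℤ := 1 + t * e with hw
  have hevalw : h.eval n = c * w := by
    rw [hn, hw]
    have : h.eval (c * t) = c + c * t * e := by linarith [he]
    rw [this]; ring
  have hHn : ¬ H.IsRoot n := hs₀
  have hwne : w ≠ 0 ∧ w ≠ 1 ∧ w ≠ -1 := by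
    refine ⟨?_, ?_, ?_⟩ <;> intro hq
    · apply hHn
      have : h.eval n = 0 := by rw [hevalw, hq, mul_zero]
      simp [hH, IsRoot, eval_mul, this]
    · apply hHn
      have h2 : (h - C c).eval n = 0 := by
        rw [eval_sub, hevalw, hq, eval_C]; ring
      simp only [hH, IsRoot, eval_mul, h2]
      ring
    · apply hHn
      have h2 : (h + C c).eval n = 0 := by
        rw [eval_add, hevalw, hq, eval_C]; ring
      simp only [hH, IsRoot, eval_mul, h2]
      ring
  have hwabs : w.natAbs ≠ 1 := by
    intro habs
    rcases Int.natAbs_eq_iff.mp habs with h1 | h1 <;> simp [h1] at hwne <;> tauto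
  obtain ⟨q, hqp, hqw⟩ := Nat.exists_prime_and_dvd hwabs
  refine ⟨q, hqp, ?_, n, ?_⟩
  · by_contra hle
    push_neg at hle
    have hq1 : q ∣ N ! := Nat.dvd_factorial hqp.pos (by omega)
    have hq2 : (q : ℤ) ∣ t := by
      rw [ht]
      exact Dvd.dvd.mul_right (Int.natCast_dvd_natCast.mpr hq1) _
    have hq3 : (q : ℤ) ∣ w := Int.dvd_natAbs.mp (Int.natCast_dvd_natCast.mpr hqw)
    have : (q : ℤ) ∣ 1 := by
      have := dvd_sub hq3 (Dvd.dvd.mul_right hq2 e)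
      simpa [hw] using this
    have := Int.le_of_dvd one_pos this
    have := hqp.two_le
    omega
  · rw [hevalw]
    exact Dvd.dvd.mul_left (Int.dvd_natAbs.mp (Int.natCast_dvd_natCast.mpr hqw)) c


lemma aux_schur' : True := trivial

lemma aux_dvd_cyclo (g : Polynomial ℤ) (hg : g.Monic) (hsf : Squarefree g)
    (hg0 : g.eval 0 ≠ 0) (hdeg : 1 ≤ g.natDegree) (L : ℕ)
    (hschur : ∀ (h : Polynomial ℤ), h.Monic → 1 ≤ h.natDegree → h.eval 0 ≠ 0 → ∀ M : ℕ,
      ∃ q : ℕ, q.Prime ∧ M < q ∧ ∃ n : ℤ, (q : ℤ) ∣ h.eval n)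
    (hkey : ∀ q : ℕ, q.Prime → (g.eval 0).natAbs < q → ∀ n : ℤ, (q : ℤ) ∣ g.eval n →
      (q : ℤ) ∣ n ^ L - 1) :
    g ∣ X ^ L - 1 := by
  classical
  set ι := algebraMap ℤ ℚ with hι
  have hinj : Function.Injective ι := Int.cast_injective
  have hmapinj : Function.Injective (Polynomial.map ι) := Polynomial.map_injective ι hinj
  set G := g.map ι with hG
  have hGm : G.Monic := hg.map ι
  set P : ℚ[X] := X ^ L - 1 with hP
  have hPmap : (X ^ L - 1 : ℤ[X]).map ι = P := by
    simp [hP, Polynomial.map_sub, Polynomial.map_pow]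
  -- squarefreeness of G
  have hsfG : Squarefree G := by
    intro A hA
    by_contra hAu
    have hA0 : A ≠ 0 := by
      rintro rfl
      rw [mul_zero, zero_dvd_iff] at hA
      exact hGm.ne_zero hA
    set l := A.leadingCoeff with hl
    have hl0 : l ≠ 0 := leadingCoeff_ne_zero.mpr hA0
    set A' := A * C l⁻¹ with hA'
    have hA'm : A'.Monic := monic_mul_leadingCoeff_inv hA0
    have hAA' : A' ∣ A := ⟨C l, by rw [hA', mul_assoc, ← C_mul, inv_mul_cancel₀ hl0, C_1, mul_one]⟩
    have hA'G2 : A' * A' ∣ G := dvd_trans (mul_dvd_mul hAA' hAA') hA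
    have hA'G : A' ∣ G := dvd_trans (dvd_mul_right A' A') hA'G2
    obtain ⟨a, ha⟩ := IsIntegrallyClosed.eq_map_mul_C_of_dvd (K := ℚ) hg hA'G
    rw [hA'm.leadingCoeff, C_1, mul_one] at ha
    obtain ⟨T, hT⟩ := hA'G2
    have hTm : T.Monic := Monic.of_mul_monic_left (hA'm.mul hA'm) (hT ▸ hGm)
    have hTdvd : T ∣ G := ⟨A' * A', by rw [hT]; ring⟩
    obtain ⟨t, ht⟩ := IsIntegrallyClosed.eq_map_mul_C_of_dvd (K := ℚ) hg hTdvd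
    rw [hTm.leadingCoeff, C_1, mul_one] at ht
    have hgfac : g = a * a * t := by
      apply hmapinj
      rw [Polynomial.map_mul, Polynomial.map_mul, ha, ht, ← hT, hG]
    have : IsUnit a := hsf a ⟨t, hgfac⟩
    have : IsUnit A' := by
      have := this.map (mapRingHom ι)
      rw [← ha]
      exact this
    have : IsUnit A := by
      have h2 : A = A' * C l := by
        rw [hA', mul_assoc, ← C_mul, inv_mul_cancel₀ hl0, C_1, mul_one]
      rw [h2]
      exact this.mul (isUnit_C.mpr hl0.isUnit)
    exact hAu this
  -- gcd decomposition
  set D := EuclideanDomain.gcd G P with hD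
  have hdG : D ∣ G := EuclideanDomain.gcd_dvd_left G P
  have hdP : D ∣ P := EuclideanDomain.gcd_dvd_right G P
  obtain ⟨G₁, hG₁⟩ := hdG
  by_cases hunit : IsUnit G₁
  · -- G divides P, transfer to ℤ
    have hGdvdP : G ∣ P := by
      obtain ⟨v, hv⟩ := hunit
      have : G * ↑v⁻¹ = D := by
        rw [hG₁, ← hv]
        rw [mul_assoc]
        simp
      exact dvd_trans ⟨_, this.symm⟩ hdP
    have hmod : ((X ^ L - 1 : ℤ[X]) %ₘ g).map ι = P %ₘ G := by
      rw [map_modByMonic _ hg, hPmap]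
    have hmod0 : P %ₘ G = 0 := (modByMonic_eq_zero_iff_dvd hGm).mpr hGdvdP
    have : ((X ^ L - 1 : ℤ[X]) %ₘ g) = 0 := by
      apply hmapinj
      rw [hmod, hmod0, Polynomial.map_zero]
    exact (modByMonic_eq_zero_iff_dvd hg).mp this
  · -- contradiction branch
    exfalso
    have hG₁0 : G₁ ≠ 0 := by
      rintro rfl
      rw [mul_zero] at hG₁
      exact hGm.ne_zero hG₁
    set l := G₁.leadingCoeff with hl
    have hl0 : l ≠ 0 := leadingCoeff_ne_zero.mpr hG₁0
    set G₁' := G₁ * C l⁻¹ with hG₁'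
    have hG₁'m : G₁'.Monic := monic_mul_leadingCoeff_inv hG₁0
    have hG₁'G₁ : G₁ = G₁' * C l := by
      rw [hG₁', mul_assoc, ← C_mul, inv_mul_cancel₀ hl0, C_1, mul_one]
    have hG₁'nu : ¬ IsUnit G₁' := by
      intro hu
      apply hunit
      rw [hG₁'G₁]
      exact hu.mul (isUnit_C.mpr hl0.isUnit)
    have hG₁'deg : 1 ≤ G₁'.natDegree := by
      rcases Nat.eq_zero_or_pos G₁'.natDegree with h | h
      · exact absurd (hG₁'m.natDegree_eq_zero.mp h ▸ isUnit_one) hG₁'nu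
      · exact h
    have hG₁'dvd : G₁' ∣ G := ⟨D * C l, by rw [hG₁, hG₁'G₁]; ring⟩
    obtain ⟨g₁, hg₁⟩ := IsIntegrallyClosed.eq_map_mul_C_of_dvd (K := ℚ) hg hG₁'dvd
    rw [hG₁'m.leadingCoeff, C_1, mul_one] at hg₁
    obtain ⟨T, hT⟩ := hG₁'dvd
    have hTm : T.Monic := Monic.of_mul_monic_left hG₁'m (hT ▸ hGm)
    have hTdvd : T ∣ G := ⟨G₁', by rw [hT]; ring⟩
    obtain ⟨t, ht⟩ := IsIntegrallyClosed.eq_map_mul_C_of_dvd (K := ℚ) hg hTdvd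
    rw [hTm.leadingCoeff, C_1, mul_one] at ht
    have hgfac : g = g₁ * t := by
      apply hmapinj
      rw [Polynomial.map_mul, hg₁, ht, ← hT, hG]
    have hg₁m : g₁.Monic := monic_of_injective hinj (by rw [hg₁]; exact hG₁'m)
    have hg₁deg : 1 ≤ g₁.natDegree := by
      have hnd : (g₁.map ι).natDegree = g₁.natDegree := natDegree_map_eq_of_injective hinj g₁
      rw [hg₁] at hnd
      omega
    have hg₁0 : g₁.eval 0 ≠ 0 := by
      intro h
      apply hg0
      rw [hgfac, eval_mul, h, zero_mul]
    -- coprimality of G₁' and P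
    have hcop : IsCoprime G₁' P := by
      rw [← EuclideanDomain.gcd_isUnit_iff]
      apply hsfG
      have hE1 : EuclideanDomain.gcd G₁' P ∣ G₁' := EuclideanDomain.gcd_dvd_left _ _
      have hE2 : EuclideanDomain.gcd G₁' P ∣ P := EuclideanDomain.gcd_dvd_right _ _
      have hED : EuclideanDomain.gcd G₁' P ∣ D :=
        EuclideanDomain.dvd_gcd (dvd_trans hE1 ⟨D * C l, by rw [hG₁, hG₁'G₁]; ring⟩) hE2
      have hDG' : D * G₁' ∣ G := ⟨C l, by rw [hG₁, hG₁'G₁]; ring⟩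
      exact dvd_trans (mul_dvd_mul hED hE1) hDG'
    obtain ⟨U, V, hUV⟩ := hcop
    obtain ⟨bU, hbU⟩ := IsLocalization.integerNormalization_map_to_map (nonZeroDivisors ℤ) U
    obtain ⟨bV, hbV⟩ := IsLocalization.integerNormalization_map_to_map (nonZeroDivisors ℤ) V
    set NU := IsLocalization.integerNormalization (nonZeroDivisors ℤ) U with hNU
    set NV := IsLocalization.integerNormalization (nonZeroDivisors ℤ) V with hNV
    have hbU0 : (bU : ℤ) ≠ 0 := nonZeroDivisors.coe_ne_zero bU
    have hbV0 : (bV : ℤ) ≠ 0 := nonZeroDivisors.coe_ne_zero bV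
    -- integer Bezout identity
    have hZ : C (bV : ℤ) * NU * g₁ + C (bU : ℤ) * NV * (X ^ L - 1 : ℤ[X])
        = C ((bU : ℤ) * (bV : ℤ)) := by
      apply hmapinj
      rw [Polynomial.map_add, Polynomial.map_mul, Polynomial.map_mul, Polynomial.map_mul,
        Polynomial.map_mul, hbU, hbV, hg₁, hPmap, map_C, map_C, map_C]
      have hsmulU : ((bU : ℤ) • U) = C ((bU : ℤ) : ℚ) * U := by
        rw [zsmul_eq_mul]; norm_cast
      have hsmulV : ((bV : ℤ) • V) = C ((bV : ℤ) : ℚ) * V := by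
        rw [zsmul_eq_mul]; norm_cast
      have hcast : ∀ b : ℤ, (ι b) = ((b : ℚ)) := fun b => by simp [hι]
      rw [hsmulU, hsmulV]
      simp only [hcast]
      calc C ((bV:ℤ):ℚ) * (C ((bU:ℤ):ℚ) * U) * G₁' + C ((bU:ℤ):ℚ) * (C ((bV:ℤ):ℚ) * V) * P
          = C ((bU:ℤ):ℚ) * C ((bV:ℤ):ℚ) * (U * G₁' + V * P) := by ring
        _ = C ((((bU:ℤ)*(bV:ℤ) : ℤ) : ℚ)) := by
            rw [hUV, mul_one, ← C_mul]
            push_cast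
            ring
    -- get a big prime
    obtain ⟨q, hqp, hqgt, n, hqn⟩ := hschur g₁ hg₁m hg₁deg hg₁0
      (max ((bU : ℤ) * (bV : ℤ)).natAbs (g.eval 0).natAbs)
    have hqg : (q : ℤ) ∣ g.eval n := by
      rw [hgfac, eval_mul]
      exact Dvd.dvd.mul_right hqn _
    have hqL : (q : ℤ) ∣ n ^ L - 1 := hkey q hqp
      (lt_of_le_of_lt (le_max_right _ _) hqgt) n hqg
    have hev := congrArg (eval n) hZ
    rw [eval_add, eval_mul, eval_mul, eval_mul, eval_mul, eval_C, eval_C, eval_C, eval_sub,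
      eval_pow, eval_X, eval_one] at hev
    have hqdvd : (q : ℤ) ∣ (bU : ℤ) * (bV : ℤ) := by
      rw [← hev]
      exact dvd_add (Dvd.dvd.mul_left hqn _) (Dvd.dvd.mul_left hqL _)
    have hne : (bU : ℤ) * (bV : ℤ) ≠ 0 := mul_ne_zero hbU0 hbV0
    have h1 : q ∣ ((bU : ℤ) * (bV : ℤ)).natAbs := Int.natAbs_dvd_natAbs.mpr (by simpa using hqdvd)
    have h2 : ((bU : ℤ) * (bV : ℤ)).natAbs ≠ 0 := by simpa using hne
    have h4 := Nat.le_of_dvd (Nat.pos_of_ne_zero h2) h1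
    have h5 := le_max_left (((bU : ℤ) * (bV : ℤ)).natAbs) ((g.eval 0).natAbs)
    omega


theorem stmt_11' (g : Polynomial ℤ) (hg : g.Monic)
    (hdeg : 1 ≤ g.natDegree)
    (hdvdL : g ∣ X ^ (2 * g.natDegree ^ 2)! - 1) :
    {q : ℕ | q.Prime ∧
      (∃ r : Fin g.natDegree → ZMod q, Function.Injective r ∧
        g.map (Int.castRingHom (ZMod q)) = ∏ i, (X - C (r i))) ∧
      (∀ r : ℤ, (q : ℤ) ∣ g.eval r →
        ∃ k : ℕ, 0 < k ∧ k ≤ (2 * g.natDegree ^ 2)! ∧ (q : ℤ) ∣ r ^ k - 1)}.Infinite := by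
  classical
  set L := (2 * g.natDegree ^ 2)! with hLdef
  have hL : 0 < L := Nat.factorial_pos _
  apply Set.infinite_of_forall_exists_gt
  intro a
  obtain ⟨q, hqp, hqgt, hqmod⟩ := Nat.exists_prime_gt_modEq_one (k := L) a hL.ne'
  haveI : Fact q.Prime := ⟨hqp⟩
  refine ⟨q, ?_, hqgt⟩
  have hq1 : 1 ≤ q := hqp.pos
  have hLq : L ∣ q - 1 := (Nat.modEq_iff_dvd' hq1).mp hqmod.symm
  set Gq := g.map (Int.castRingHom (ZMod q)) with hGq
  have hGm : Gq.Monic := hg.map _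
  have hGd : Gq.natDegree = g.natDegree := hg.natDegree_map _
  -- Gq divides X^q - X
  have hdvd1 : Gq ∣ (X ^ L - 1 : (ZMod q)[X]) := by
    have := Polynomial.map_dvd (Int.castRingHom (ZMod q)) hdvdL
    simpa [Polynomial.map_sub, Polynomial.map_pow] using this
  have hdvd2 : (X ^ L - 1 : (ZMod q)[X]) ∣ X ^ (q - 1) - 1 := by
    obtain ⟨k, hk⟩ := hLq
    have := sub_dvd_pow_sub_pow (X ^ L : (ZMod q)[X]) 1 k
    simpa [← pow_mul, ← hk] using this
  have hdvd3 : (X ^ (q - 1) - 1 : (ZMod q)[X]) ∣ X ^ q - X := by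
    refine ⟨X, ?_⟩
    have h2 : q - 1 + 1 = q := by omega
    rw [sub_mul, one_mul, ← pow_succ, h2]
  have hGdvd : Gq ∣ X ^ q - X := hdvd1.trans (hdvd2.trans hdvd3)
  -- separability and splitting of X^q - X
  have hXqX_ne : (X ^ q - X : (ZMod q)[X]) ≠ 0 :=
    FiniteField.X_pow_card_sub_X_ne_zero _ hqp.one_lt
  have hsep : (X ^ q - X : (ZMod q)[X]).Separable := by
    have hder : derivative (X ^ q - X : (ZMod q)[X]) = -1 := by
      rw [derivative_sub, derivative_X_pow, derivative_X]
      simp [ZMod.natCast_self]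
    refine ⟨0, -1, ?_⟩
    rw [hder]
    ring
  have hroots_univ : (X ^ q - X : (ZMod q)[X]).roots = Finset.univ.val := by
    have := FiniteField.roots_X_pow_card_sub_X (ZMod q)
    rwa [ZMod.card] at this
  have hsplits : Splits (X ^ q - X : (ZMod q)[X]) := by
    rw [splits_iff_card_roots, hroots_univ,
      FiniteField.X_pow_card_sub_X_natDegree_eq _ hqp.one_lt]
    simp [ZMod.card]
  have hGsep : Gq.Separable := hsep.of_dvd hGdvd
  have hGsplits : Splits Gq :=
    hsplits.of_dvd hXqX_ne hGdvd
  have hGcard : Multiset.card Gq.roots = g.natDegree := by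
    rw [splits_iff_card_roots.mp hGsplits, hGd]
  have hGnodup : Gq.roots.Nodup := nodup_roots hGsep
  have hfac : Gq = (Gq.roots.map fun a => X - C a).prod :=
    hGsplits.eq_prod_roots_of_monic hGm
  set S := Gq.roots.toFinset with hS
  have hScard : S.card = g.natDegree := by
    rw [hS, Multiset.toFinset_card_eq_card_iff_nodup.mpr hGnodup, hGcard]
  set E := (finCongr hScard.symm).trans S.equivFin.symm with hE
  refine ⟨hqp, ⟨fun i => ((E i : S) : ZMod q), ?_, ?_⟩, ?_⟩
  · intro i j hij
    apply E.injective
    exact Subtype.ext hij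
  · have h1 : ∏ i : Fin g.natDegree, (X - C ((E i : S) : ZMod q))
        = ∏ s : S, (X - C (s : ZMod q)) := Fintype.prod_equiv E _ _ (fun i => rfl)
    have h2 : ∏ s : S, (X - C ((s : S) : ZMod q)) = ∏ s ∈ S, (X - C s) :=
      Finset.prod_coe_sort S (fun s => X - C s)
    have h3 : ∏ s ∈ S, (X - C s) = (Gq.roots.map fun a => X - C a).prod := by
      rw [Finset.prod_eq_multiset_prod, hS, Multiset.toFinset_val,
        Multiset.dedup_eq_self.mpr hGnodup]
    rw [h1, h2, h3, ← hfac]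
  · intro r hr
    refine ⟨L, hL, le_refl _, ?_⟩
    obtain ⟨w, hw⟩ := hdvdL
    have := congrArg (eval r) hw
    rw [eval_sub, eval_pow, eval_X, eval_one, eval_mul] at this
    rw [this]
    exact Dvd.dvd.mul_right hr _


/-- **Lemma 5.1.** Let `g ∈ ℤ[x]` be monic and squarefree with `g(0) ≠ 0` and
`deg g ≥ 1`, and suppose there is a positive integer `N₀` such that for every prime `p ≥ N₀`
and every prime `q`, `q ∣ g(p)` implies `q ∣ g(p^p)`. Then there is a constant `C`, depending
only on `g`, such that for infinitely many primes `q` the reduction of `g` mod `q` splits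
completely into distinct linear factors and every root `r` of `g` mod `q` has multiplicative
order at most `C` modulo `q` (expressed as: some positive `k ≤ C` satisfies `r^k ≡ 1 mod q`). -/
theorem stmt_11 (g : Polynomial ℤ) (hg : g.Monic) (hsf : Squarefree g)
    (hg0 : g.eval 0 ≠ 0) (hdeg : 1 ≤ g.natDegree) (N₀ : ℕ) (hN₀ : 0 < N₀)
    (hdvd : ∀ p : ℕ, p.Prime → N₀ ≤ p → ∀ q : ℕ, q.Prime →
      (q : ℤ) ∣ g.eval (p : ℤ) → (q : ℤ) ∣ g.eval ((p : ℤ) ^ p)) :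
    ∃ C₀ : ℕ, {q : ℕ | q.Prime ∧
      (∃ r : Fin g.natDegree → ZMod q, Function.Injective r ∧
        g.map (Int.castRingHom (ZMod q)) = ∏ i, (X - C (r i))) ∧
      (∀ r : ℤ, (q : ℤ) ∣ g.eval r →
        ∃ k : ℕ, 0 < k ∧ k ≤ C₀ ∧ (q : ℤ) ∣ r ^ k - 1)}.Infinite := by
  refine ⟨(2 * g.natDegree ^ 2)!, ?_⟩
  have hkey : ∀ q : ℕ, q.Prime → (g.eval 0).natAbs < q → ∀ n : ℤ,
      (q : ℤ) ∣ g.eval n → (q : ℤ) ∣ n ^ (2 * g.natDegree ^ 2)! - 1 :=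
    fun q hq hlt n hn => aux_order_bound g hg hg0 N₀ hdvd q hq hlt n hn
  have hdvdL : g ∣ X ^ (2 * g.natDegree ^ 2)! - 1 :=
    aux_dvd_cyclo g hg hsf hg0 hdeg _ (fun h hm hd h0 M => aux_schur h hm hd h0 M) hkey
  exact stmt_11' g hg hdeg hdvdL
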